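/- Let 𝒳, 𝒴, 𝒵 be finite types, d ≥ 1, P a probability mass function on 𝒳×𝒴×𝒵, and (ρ^{x,y,z}) a family of d×d density matrices. Then the trace distance between the two Markov states equals a purely classical statistical distance: δ(ρ_{X↔Y↔(ZE)}, ρ_{X↔(Y,Z)↔E}) = (1/2)·Σ_{x,y,z} | P_{XY}(x,y)·P_{YZ}(y,z)/P_Y(y) − P(x,y,z) |, where terms with P_Y(y) = 0 are read as |0 − P(x,y,z)| = 0. -/

import Mathlib

open Matrix Kronecker
open scoped ComplexOrder

/-- Trace distance of two (Hermitian) matrices: half the sum of the absolute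
values of the eigenvalues of their difference. -/
noncomputable def traceDist {n : Type*} [Fintype n] [DecidableEq n]
    (A B : Matrix n n ℂ) : ℝ :=
  if h : (A - B).IsHermitian then (1 / 2) * ∑ i, |h.eigenvalues i| else 0

/-- A probability mass function on a finite type. -/
def IsPMF {𝒯 : Type*} [Fintype 𝒯] (P : 𝒯 → ℝ) : Prop :=
  (∀ t, 0 ≤ P t) ∧ ∑ t, P t = 1

/-- A density matrix: positive semidefinite (hence Hermitian) with trace 1. -/
def IsDensity {d : ℕ} (ρ : Matrix (Fin d) (Fin d) ℂ) : Prop :=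
  ρ.PosSemidef ∧ ρ.trace = 1

/-- The block-diagonal density matrix of a cq-state:  ρ = Σ_t P(t)·(E_{t,t} ⊗ ρ^t). -/
noncomputable def cqState {𝒯 : Type*} [Fintype 𝒯] [DecidableEq 𝒯] {d : ℕ}
    (P : 𝒯 → ℝ) (ρ : 𝒯 → Matrix (Fin d) (Fin d) ℂ) :
    Matrix (𝒯 × Fin d) (𝒯 × Fin d) ℂ :=
  ∑ t, (P t : ℂ) • (single t t 1 ⊗ₖ ρ t)


/- ### Auxiliary lemmas ### -/
section AuxProof
open Polynomial
set_option linter.unusedSectionVars false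


lemma posSemidef_ofReal_smul {n : Type*} [Fintype n] {M : Matrix n n ℂ}
    (hM : M.PosSemidef) {r : ℝ} (hr : 0 ≤ r) : ((r : ℂ) • M).PosSemidef := by
  constructor
  · show _ᴴ = _
    rw [Matrix.conjTranspose_smul, hM.1]
    congr 1
    exact Complex.conj_ofReal r
  · intro x
    exact (Matrix.PosSemidef.smul hM (Complex.zero_le_real.mpr hr)).2 x


section A
variable {n : Type*} [Fintype n] [DecidableEq n]

lemma charpoly_diagonal' (dv : n → ℂ) :
    (Matrix.diagonal dv).charpoly = ∏ i, (X - C (dv i)) := by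
  have h : (Matrix.diagonal dv).charmatrix = Matrix.diagonal (fun i => X - C (dv i)) := by
    ext i j
    by_cases h : i = j
    · subst h; simp
    · simp [Matrix.charmatrix_apply_ne _ _ _ h, Matrix.diagonal_apply_ne _ h]
  rw [Matrix.charpoly, h, Matrix.det_diagonal]

lemma charpoly_conj' (U B : Matrix n n ℂ) (hU : U * star U = 1) :
    (U * B * star U).charpoly = B.charpoly := by
  have hone : U.map ⇑C * (star U).map ⇑C = (1 : Matrix n n ℂ[X]) := by
    rw [← Matrix.map_mul, hU, Matrix.map_one _ (map_zero C) (map_one C)]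
  have key : charmatrix (U * B * star U) = U.map ⇑C * charmatrix B * (star U).map ⇑C := by
    have hscalar : Matrix.scalar n (X : ℂ[X]) = (X : ℂ[X]) • (1 : Matrix n n ℂ[X]) := by
      rw [Matrix.smul_one_eq_diagonal]; rfl
    have hmapmul : ((U * B * star U).map ⇑C : Matrix n n ℂ[X])
        = U.map ⇑C * B.map ⇑C * (star U).map ⇑C := by
      rw [Matrix.map_mul, Matrix.map_mul]
    show Matrix.scalar n (X : ℂ[X]) - (U * B * star U).map ⇑C = _
    have hcm : charmatrix B = Matrix.scalar n (X : ℂ[X]) - B.map ⇑C := rfl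
    rw [hmapmul, hcm, mul_sub, sub_mul, hscalar]
    congr 1
    rw [mul_smul_comm, smul_mul_assoc, mul_one, hone]
  rw [Matrix.charpoly, Matrix.charpoly, key, Matrix.det_mul, Matrix.det_mul]
  have hdet : (U.map ⇑C).det * ((star U).map ⇑C).det = 1 := by
    rw [← Matrix.det_mul, hone, Matrix.det_one]
  calc (U.map ⇑C).det * (charmatrix B).det * ((star U).map ⇑C).det
      = (charmatrix B).det * ((U.map ⇑C).det * ((star U).map ⇑C).det) := by ring
    _ = (charmatrix B).det := by rw [hdet, mul_one]

lemma sum_abs_eig {A : Matrix n n ℂ} (hA : A.IsHermitian) (U : Matrix n n ℂ)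
    (hU : U * star U = 1) (dv : n → ℝ)
    (hdec : A = U * Matrix.diagonal (fun i => (dv i : ℂ)) * star U) :
    ∑ i, |hA.eigenvalues i| = ∑ i, |dv i| := by
  have hc1 : A.charpoly = ∏ i, (X - C ((dv i : ℂ))) := by
    rw [hdec, charpoly_conj' _ _ hU, charpoly_diagonal']
  have hVU : (hA.eigenvectorUnitary : Matrix n n ℂ) * star (hA.eigenvectorUnitary : Matrix n n ℂ) = 1 :=
    Matrix.mem_unitaryGroup_iff.mp hA.eigenvectorUnitary.2
  have hc2 : A.charpoly = ∏ i, (X - C ((hA.eigenvalues i : ℂ))) := by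
    conv_lhs => rw [hA.spectral_theorem, Unitary.conjStarAlgAut_apply]
    rw [charpoly_conj' _ _ hVU, charpoly_diagonal']
    rfl
  have hroots : ∀ g : n → ℝ,
      (∏ i, (X - C ((g i : ℂ)))).roots = Finset.univ.val.map (fun i => ((g i : ℂ))) := by
    intro g
    rw [Finset.prod_eq_multiset_prod]
    have := roots_multiset_prod_X_sub_C (Finset.univ.val.map fun i => ((g i : ℂ)))
    simpa [Multiset.map_map, Function.comp_def] using this
  have hms : Finset.univ.val.map (fun i => ((hA.eigenvalues i : ℂ)))
      = Finset.univ.val.map (fun i => ((dv i : ℂ))) := by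
    rw [← hroots, ← hroots, ← hc1, ← hc2]
  have hmsr : Finset.univ.val.map hA.eigenvalues = Finset.univ.val.map dv := by
    apply Multiset.map_injective Complex.ofReal_injective
    simpa [Multiset.map_map, Function.comp_def] using hms
  calc ∑ i, |hA.eigenvalues i|
      = ((Finset.univ.val.map hA.eigenvalues).map abs).sum := by
        rw [Multiset.map_map]; rfl
    _ = ((Finset.univ.val.map dv).map abs).sum := by rw [hmsr]
    _ = ∑ i, |dv i| := by rw [Multiset.map_map]; rfl

end A

section B
variable {𝒯 : Type*} [Fintype 𝒯] [DecidableEq 𝒯] {d : ℕ}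

lemma cqState_eq_blockDiagonal (P : 𝒯 → ℝ) (σ : 𝒯 → Matrix (Fin d) (Fin d) ℂ) :
    cqState P σ = (blockDiagonal (fun t => (P t : ℂ) • σ t)).submatrix
      (Equiv.prodComm (Fin d) 𝒯).symm (Equiv.prodComm (Fin d) 𝒯).symm := by
  ext ⟨t, i⟩ ⟨s, j⟩
  simp only [cqState, Matrix.sum_apply, Matrix.smul_apply, kroneckerMap_apply,
    Matrix.submatrix_apply, Equiv.prodComm_symm, Equiv.prodComm_apply, Prod.swap_prod_mk,
    Matrix.blockDiagonal_apply, Matrix.single, Matrix.of_apply, smul_eq_mul]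
  by_cases h : t = s
  · subst h
    rw [Finset.sum_eq_single t]
    · simp
    · intro u _ hu; simp [hu]
    · simp
  · rw [Finset.sum_eq_zero]
    · simp [h]
    · intro u _
      by_cases h1 : u = t
      · subst h1; simp [h]
      · simp [h1]

lemma block_spectral (σ : 𝒯 → Matrix (Fin d) (Fin d) ℂ) (hσ : ∀ t, (σ t).PosSemidef)
    (c : 𝒯 → ℝ) (t : 𝒯) :
    (c t : ℂ) • σ t = ((hσ t).1.eigenvectorUnitary : Matrix (Fin d) (Fin d) ℂ) *
      Matrix.diagonal (fun i => ((c t * (hσ t).1.eigenvalues i : ℝ) : ℂ)) *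
      star ((hσ t).1.eigenvectorUnitary : Matrix (Fin d) (Fin d) ℂ) := by
  conv_lhs => rw [(hσ t).1.spectral_theorem, Unitary.conjStarAlgAut_apply]
  rw [← smul_mul_assoc, ← mul_smul_comm, ← Matrix.diagonal_smul]
  have hfun : ((c t : ℂ) • (RCLike.ofReal ∘ (hσ t).1.eigenvalues) : Fin d → ℂ)
      = fun i => ((c t * (hσ t).1.eigenvalues i : ℝ) : ℂ) := by
    funext i
    show (c t : ℂ) * ((hσ t).1.eigenvalues i : ℂ) = ((c t * (hσ t).1.eigenvalues i : ℝ) : ℂ)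
    push_cast
    ring
  rw [hfun]

lemma block_trace (σ : 𝒯 → Matrix (Fin d) (Fin d) ℂ) (hσ : ∀ t, (σ t).PosSemidef) (t : 𝒯) :
    (σ t).trace = ∑ i, ((hσ t).1.eigenvalues i : ℂ) := by
  conv_lhs => rw [(hσ t).1.spectral_theorem, Unitary.conjStarAlgAut_apply]
  rw [Matrix.trace_mul_cycle]
  rw [Matrix.mem_unitaryGroup_iff'.mp (hσ t).1.eigenvectorUnitary.2, Matrix.one_mul,
    Matrix.trace_diagonal]
  rfl

set_option maxHeartbeats 1000000 in
theorem cq_traceDist (Q P : 𝒯 → ℝ) (σ : 𝒯 → Matrix (Fin d) (Fin d) ℂ)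
    (hσ : ∀ t, (σ t).PosSemidef)
    (htr : ∀ t, (σ t).trace = 1 ∨ Q t = P t) :
    traceDist (cqState Q σ) (cqState P σ) = (1 / 2) * ∑ t, |Q t - P t| := by
  classical
  set e := (Equiv.prodComm (Fin d) 𝒯) with he
  set c : 𝒯 → ℝ := fun t => Q t - P t with hc
  set V : 𝒯 → Matrix (Fin d) (Fin d) ℂ :=
    fun t => ((hσ t).1.eigenvectorUnitary : Matrix (Fin d) (Fin d) ℂ) with hV
  set μ : 𝒯 → Fin d → ℝ := fun t => (hσ t).1.eigenvalues with hμ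
  set dv : 𝒯 × Fin d → ℝ := fun p => c p.1 * μ p.1 p.2 with hdv
  set U : Matrix (𝒯 × Fin d) (𝒯 × Fin d) ℂ :=
    (blockDiagonal V).submatrix e.symm e.symm with hU
  -- difference as block diagonal
  have hsub : cqState Q σ - cqState P σ =
      (blockDiagonal (fun t => (c t : ℂ) • σ t)).submatrix e.symm e.symm := by
    rw [cqState_eq_blockDiagonal Q σ, cqState_eq_blockDiagonal P σ]
    have hfun : (fun t => (c t : ℂ) • σ t)
        = (fun t => ((Q t : ℂ)) • σ t) - (fun t => ((P t : ℂ)) • σ t) := by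
      funext t
      show (c t : ℂ) • σ t = (Q t : ℂ) • σ t - (P t : ℂ) • σ t
      rw [← sub_smul]
      norm_cast
    rw [hfun, Matrix.blockDiagonal_sub]
    rfl
  have hstarU : star U = (blockDiagonal (fun t => star (V t))).submatrix e.symm e.symm := by
    show Uᴴ = _
    rw [hU, Matrix.conjTranspose_submatrix, Matrix.blockDiagonal_conjTranspose]
    rfl
  have hUU : U * star U = 1 := by
    rw [hstarU, hU, Matrix.submatrix_mul_equiv, ← Matrix.blockDiagonal_mul]
    have : (fun t => V t * star (V t)) = (1 : 𝒯 → Matrix (Fin d) (Fin d) ℂ) := by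
      funext t
      exact Matrix.mem_unitaryGroup_iff.mp (hσ t).1.eigenvectorUnitary.2
    rw [this, Matrix.blockDiagonal_one, Matrix.submatrix_one_equiv]
  have hD : Matrix.diagonal (fun p : 𝒯 × Fin d => (dv p : ℂ)) =
      (blockDiagonal (fun t => Matrix.diagonal (fun i => ((dv (t, i) : ℝ) : ℂ)))).submatrix
        e.symm e.symm := by
    rw [Matrix.blockDiagonal_diagonal, Matrix.submatrix_diagonal_equiv]
    rfl
  have hdec : cqState Q σ - cqState P σ =
      U * Matrix.diagonal (fun p : 𝒯 × Fin d => (dv p : ℂ)) * star U := by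
    rw [hsub, hD, hstarU, hU, Matrix.submatrix_mul_equiv, Matrix.submatrix_mul_equiv,
      ← Matrix.blockDiagonal_mul, ← Matrix.blockDiagonal_mul]
    have hfun : (fun t => (c t : ℂ) • σ t)
        = fun t => V t * Matrix.diagonal (fun i => ((dv (t, i) : ℝ) : ℂ)) * star (V t) := by
      funext t
      exact block_spectral σ hσ c t
    rw [hfun]
  have herm : (cqState Q σ - cqState P σ).IsHermitian := by
    rw [Matrix.IsHermitian, hdec]
    calc (U * Matrix.diagonal (fun p : 𝒯 × Fin d => (dv p : ℂ)) * star U)ᴴ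
        = (star U)ᴴ * ((Matrix.diagonal fun p : 𝒯 × Fin d => (dv p : ℂ))ᴴ * Uᴴ) := by
          rw [Matrix.conjTranspose_mul, Matrix.conjTranspose_mul]
      _ = U * (Matrix.diagonal (fun p : 𝒯 × Fin d => (dv p : ℂ)) * star U) := by
          have h1 : (star fun p : 𝒯 × Fin d => (dv p : ℂ)) = fun p : 𝒯 × Fin d => (dv p : ℂ) := by
            funext p
            exact Complex.conj_ofReal _
          rw [Matrix.diagonal_conjTranspose, h1, ← Matrix.star_eq_conjTranspose,
            ← Matrix.star_eq_conjTranspose, star_star]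
      _ = U * Matrix.diagonal (fun p : 𝒯 × Fin d => (dv p : ℂ)) * star U := by
          rw [Matrix.mul_assoc]
  rw [traceDist, dif_pos herm, sum_abs_eig herm U hUU dv hdec]
  congr 1
  rw [Fintype.sum_prod_type]
  apply Finset.sum_congr rfl
  intro t _
  have habs : ∀ i, |dv (t, i)| = |c t| * μ t i := by
    intro i
    rw [hdv, abs_mul, abs_of_nonneg ((hσ t).eigenvalues_nonneg i)]
  rw [Finset.sum_congr rfl fun i _ => habs i, ← Finset.mul_sum]
  rcases htr t with h1 | h2
  · have : ∑ i, μ t i = 1 := by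
      have h := block_trace σ hσ t
      rw [h1] at h
      have : ((∑ i, μ t i : ℝ) : ℂ) = ((1 : ℝ) : ℂ) := by
        push_cast
        rw [← h]
      have := Complex.ofReal_injective this
      simpa using this
    rw [this, mul_one]
  · have hct : c t = 0 := by rw [hc]; simp [h2]
    simp [hct, h2, sub_self]
end B

end AuxProof

set_option maxHeartbeats 2000000 in
/-- The trace distance between the Markov states ρ_{X↔Y↔(ZE)} and ρ_{X↔(Y,Z)↔E}
equals the purely classical statistical distance of the underlying
distributions. -/
theorem stmt6 {𝒳 𝒴 𝒵 : Type*} [Fintype 𝒳] [DecidableEq 𝒳]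
    [Fintype 𝒴] [DecidableEq 𝒴] [Fintype 𝒵] [DecidableEq 𝒵] {d : ℕ} (hd : 1 ≤ d)
    (P : 𝒳 × 𝒴 × 𝒵 → ℝ) (hP : IsPMF P)
    (ρ : 𝒳 × 𝒴 × 𝒵 → Matrix (Fin d) (Fin d) ℂ) (hρ : ∀ t, IsDensity (ρ t))
    -- marginals
    (PY : 𝒴 → ℝ) (hPY : ∀ y, PY y = ∑ x, ∑ z, P (x, y, z))
    (PXY : 𝒳 × 𝒴 → ℝ) (hPXY : ∀ x y, PXY (x, y) = ∑ z, P (x, y, z))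
    (PYZ : 𝒴 × 𝒵 → ℝ) (hPYZ : ∀ y z, PYZ (y, z) = ∑ x, P (x, y, z))
    -- conditional states ρ_E^{y,z}
    (ρE : 𝒴 × 𝒵 → Matrix (Fin d) (Fin d) ℂ)
    (hρE : ∀ y z, ρE (y, z) =
      if 0 < PYZ (y, z)
      then ((PYZ (y, z) : ℂ))⁻¹ • ∑ x, (P (x, y, z) : ℂ) • ρ (x, y, z)
      else 0) :
    traceDist
        (cqState
          (fun t => if PY t.2.1 = 0 then 0 else PXY (t.1, t.2.1) * PYZ t.2 / PY t.2.1)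
          (fun t => ρE t.2))
        (cqState P (fun t => ρE t.2))
      = (1 / 2) * ∑ t : 𝒳 × 𝒴 × 𝒵,
          |(if PY t.2.1 = 0 then 0 else PXY (t.1, t.2.1) * PYZ t.2 / PY t.2.1) - P t| := by
  classical
  have hPYZnn : ∀ y z, 0 ≤ PYZ (y, z) := fun y z => by
    rw [hPYZ]; exact Finset.sum_nonneg fun x _ => hP.1 _
  have hσ : ∀ t : 𝒳 × 𝒴 × 𝒵, (ρE t.2).PosSemidef := by
    intro t
    obtain ⟨x, y, z⟩ := t
    rw [hρE y z]
    split_ifs with h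
    · have hsum : (∑ x, (P (x, y, z) : ℂ) • ρ (x, y, z)).PosSemidef := by
        refine Finset.sum_induction _ _ (fun a b ha hb => ha.add hb) Matrix.PosSemidef.zero ?_
        intro x' _
        exact posSemidef_ofReal_smul ((hρ (x', y, z)).1) (hP.1 _)
      rw [← Complex.ofReal_inv]
      exact posSemidef_ofReal_smul hsum (inv_nonneg.mpr (hPYZnn y z))
    · exact Matrix.PosSemidef.zero
  have htr : ∀ t : 𝒳 × 𝒴 × 𝒵, (ρE t.2).trace = 1 ∨
      (if PY t.2.1 = 0 then 0 else PXY (t.1, t.2.1) * PYZ t.2 / PY t.2.1) = P t := by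
    intro t
    obtain ⟨x, y, z⟩ := t
    by_cases h : 0 < PYZ (y, z)
    · left
      rw [hρE y z, if_pos h, Matrix.trace_smul, Matrix.trace_sum]
      have hc : ∀ x' ∈ Finset.univ, ((P (x', y, z) : ℂ) • ρ (x', y, z)).trace
          = ((P (x', y, z) : ℝ) : ℂ) := by
        intro x' _
        rw [Matrix.trace_smul, (hρ (x', y, z)).2, smul_eq_mul, mul_one]
      rw [Finset.sum_congr rfl hc, ← Complex.ofReal_sum, ← hPYZ y z, smul_eq_mul,
        inv_mul_cancel₀]
      exact Complex.ofReal_ne_zero.mpr (ne_of_gt h)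
    · right
      have hz : PYZ (y, z) = 0 := le_antisymm (not_lt.mp h) (hPYZnn y z)
      have hPt : P (x, y, z) = 0 := by
        have h1 := (hPYZ y z).symm.trans hz
        exact (Finset.sum_eq_zero_iff_of_nonneg (fun x' _ => hP.1 _)).mp h1 x (Finset.mem_univ x)
      rw [hPt]
      show (if PY y = 0 then 0 else PXY (x, y) * PYZ (y, z) / PY y) = 0
      split_ifs with h1
      · rfl
      · rw [hz, mul_zero, zero_div]
  exact cq_traceDist _ P _ hσ htr
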